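/- Let n ≥ 5 be an integer. There exist a constant C > 0 and ℓ₀ ≥ 1 such that for every real ℓ ≥ ℓ₀, | I₂(ℓ) + ((n−1)·√π / (2(n−4)^{3/2})) · ℓ^{3/2} | ≤ C·ℓ^{1/2}. In particular, ℓ^{−3/2} · I₂(ℓ) → −(n−1)√π / (2(n−4)^{3/2}) as ℓ → ∞, so I₂(ℓ) → −∞. -/

import Mathlib

open Real Filter MeasureTheory

/-- First eigenvalue of the Schouten tensor of `g_ℓ = e^{−2ℓs²} g_{S^n}` w.r.t. `g_{S^n}`. -/
noncomputable def lam1 (ℓ s : ℝ) : ℝ :=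
  1 / 2 + 2 * ℓ - 4 * ℓ * s ^ 2 + 2 * ℓ ^ 2 * s ^ 2 * (1 - s ^ 2)

/-- Second eigenvalue (of multiplicity `n − 1`). -/
noncomputable def lam2 (ℓ s : ℝ) : ℝ :=
  1 / 2 - 2 * ℓ * s ^ 2 - 2 * ℓ ^ 2 * s ^ 2 * (1 - s ^ 2)

/-- Total σ₂-curvature integral `I₂(ℓ)` (up to the factor `ω_{n−1}`). -/
noncomputable def I2 (n : ℕ) (ℓ : ℝ) : ℝ :=
  ∫ s in (-1 : ℝ)..1,
    Real.exp (-((n : ℝ) - 4) * ℓ * s ^ 2) * (1 - s ^ 2) ^ (((n : ℝ) - 2) / 2) *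
      ((n - 1) * lam1 ℓ s * lam2 ℓ s + ((n - 1) * (n - 2) / 2) * (lam2 ℓ s) ^ 2)



lemma pow_le_exp_aux {c : ℝ} (hc : 0 < c) (k : ℕ) (x : ℝ) :
    x ^ (2 * k) ≤ (2 * k / c) ^ k * Real.exp (c / 2 * x ^ 2) := by
  rcases Nat.eq_zero_or_pos k with hk | hk
  · subst hk; simpa using Real.one_le_exp (by positivity)
  · have ht : (0:ℝ) ≤ c * x ^ 2 / (2 * k) := by positivity
    have h1 : c * x ^ 2 / (2 * k) ≤ Real.exp (c * x ^ 2 / (2 * k)) :=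
      le_trans (by linarith) (Real.add_one_le_exp _)
    have hxx : x ^ (2 * k) = ((2 * k / c) * (c * x ^ 2 / (2 * k))) ^ k := by
      rw [pow_mul]
      congr 1
      field_simp
    rw [hxx, mul_pow]
    have h2 : (c * x ^ 2 / (2 * k)) ^ k ≤ Real.exp (c * x ^ 2 / (2 * k)) ^ k :=
      pow_le_pow_left₀ ht h1 k
    have h3 : Real.exp (c * x ^ 2 / (2 * k)) ^ k = Real.exp (c / 2 * x ^ 2) := by
      rw [← Real.exp_nat_mul]
      congr 1
      field_simp
    refine mul_le_mul_of_nonneg_left ?_ (by positivity)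
    rw [← h3]; exact h2

lemma integrable_pow_gauss {c : ℝ} (hc : 0 < c) (k : ℕ) :
    Integrable (fun x : ℝ => x ^ k * Real.exp (-c * x ^ 2)) := by
  have h2 : (0:ℝ) < c / 2 := by linarith
  refine ((integrable_exp_neg_mul_sq h2).const_mul ((1:ℝ) + (2 * k / c) ^ k)).mono' ?_ ?_
  · exact ((continuous_pow k).mul (by continuity)).aestronglyMeasurable
  · filter_upwards with x
    have hx : ‖x ^ k * Real.exp (-c * x ^ 2)‖ = |x| ^ k * Real.exp (-c * x ^ 2) := by
      rw [norm_mul, norm_pow, Real.norm_eq_abs, Real.norm_eq_abs,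
        abs_of_pos (Real.exp_pos _)]
    rw [hx]
    have h1 : |x| ^ k ≤ 1 + x ^ (2 * k) := by
      rcases le_or_gt (|x|) 1 with h | h
      · have : |x| ^ k ≤ 1 := pow_le_one₀ (abs_nonneg x) h
        nlinarith [even_two_mul k, pow_nonneg (sq_nonneg x) k, sq_abs x,
          pow_mul x 2 k, pow_nonneg (abs_nonneg x) (2*k)]
      · have h2' : |x| ^ k ≤ |x| ^ (2 * k) := pow_le_pow_right₀ h.le (by omega)
        have : |x| ^ (2 * k) = x ^ (2 * k) := by
          rw [pow_mul, sq_abs, ← pow_mul]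
        nlinarith
    have h2' : x ^ (2 * k) * Real.exp (-c * x ^ 2) ≤
        (2 * k / c) ^ k * Real.exp (-(c/2) * x ^ 2) := by
      have := pow_le_exp_aux hc k x
      have he : Real.exp (-c * x ^ 2) = (Real.exp (c / 2 * x ^ 2))⁻¹ * Real.exp (-(c/2) * x^2) := by
        rw [← Real.exp_neg, ← Real.exp_add]; ring_nf
      rw [he, ← mul_assoc]
      refine mul_le_mul_of_nonneg_right ?_ (Real.exp_pos _).le
      rw [← div_eq_mul_inv, div_le_iff₀ (Real.exp_pos _)]
      calc x ^ (2*k) ≤ (2*k/c)^k * Real.exp (c/2 * x^2) := this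
      _ = _ := by ring
    have h3 : Real.exp (-c * x^2) ≤ Real.exp (-(c/2) * x^2) := by
      apply Real.exp_le_exp.2; nlinarith [sq_nonneg x]
    calc |x| ^ k * Real.exp (-c * x^2) ≤ (1 + x ^ (2*k)) * Real.exp (-c * x^2) := by
          apply mul_le_mul_of_nonneg_right h1 (Real.exp_pos _).le
    _ = Real.exp (-c*x^2) + x^(2*k) * Real.exp (-c*x^2) := by ring
    _ ≤ Real.exp (-(c/2)*x^2) + (2*k/c)^k * Real.exp (-(c/2)*x^2) := add_le_add h3 h2'
    _ = (1 + (2*k/c)^k) * Real.exp (-(c/2) * x^2) := by ring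

lemma gauss_deriv {c : ℝ} (x : ℝ) :
    HasDerivAt (fun x : ℝ => Real.exp (-c * x ^ 2)) (Real.exp (-c * x ^ 2) * (-c * (2 * x))) x := by
  have h1 : HasDerivAt (fun x : ℝ => -c * x ^ 2) (-c * (2 * x)) x := by
    simpa using ((hasDerivAt_pow 2 x).const_mul (-c))
  exact h1.exp

lemma mom_rec {c : ℝ} (hc : 0 < c) (k : ℕ) (hk : 1 ≤ k) :
    (2 * (k : ℝ) - 1) * ∫ x : ℝ, x ^ (2 * k - 2) * Real.exp (-c * x ^ 2) =
      2 * c * ∫ x : ℝ, x ^ (2 * k) * Real.exp (-c * x ^ 2) := by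
  have key : ∫ x : ℝ, ((2 * (k : ℝ) - 1) * (x ^ (2 * k - 2) * Real.exp (-c * x ^ 2))
      - 2 * c * (x ^ (2 * k) * Real.exp (-c * x ^ 2))) = 0 := by
    apply integral_eq_zero_of_hasDerivAt_of_integrable
      (f := fun x : ℝ => x ^ (2 * k - 1) * Real.exp (-c * x ^ 2))
    · intro x
      have h1 : HasDerivAt (fun x : ℝ => x ^ (2 * k - 1)) ((2 * k - 1 : ℕ) * x ^ (2 * k - 2)) x := by
        have := hasDerivAt_pow (2 * k - 1) x
        rw [show 2 * k - 2 = 2 * k - 1 - 1 by omega]; exact this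
      have hD := h1.mul (gauss_deriv (c := c) x)
      have h2 : x ^ (2 * k - 1) * x = x ^ (2 * k) := by
        rw [← pow_succ]; congr 1; omega
      refine HasDerivAt.congr_deriv hD ?_
      rw [← h2]
      push_cast [Nat.cast_sub (show 1 ≤ 2 * k by omega)]
      try ring
    · exact ((integrable_pow_gauss hc (2 * k - 2)).const_mul _).sub
        ((integrable_pow_gauss hc (2 * k)).const_mul _)
    · exact integrable_pow_gauss hc (2 * k - 1)
  rw [integral_sub (((integrable_pow_gauss hc (2 * k - 2)).const_mul _))
      ((integrable_pow_gauss hc (2 * k)).const_mul _), integral_const_mul, integral_const_mul]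
      at key
  linarith

lemma mom1 {c : ℝ} (hc : 0 < c) :
    ∫ x : ℝ, x ^ 2 * Real.exp (-c * x ^ 2) = Real.sqrt (π / c) / (2 * c) := by
  have h := mom_rec hc 1 le_rfl
  have h0 : ∫ x : ℝ, x ^ (2 * 1 - 2) * Real.exp (-c * x ^ 2) = Real.sqrt (π / c) := by
    rw [← integral_gaussian c]
    congr 1 with x
    norm_num
  rw [h0, show (2:ℕ)*1 = 2 from rfl] at h
  set S := Real.sqrt (π / c) with hS
  set I := ∫ x : ℝ, x ^ 2 * Real.exp (-c * x ^ 2) with hI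
  push_cast at h
  field_simp
  linarith

lemma mom2 {c : ℝ} (hc : 0 < c) :
    ∫ x : ℝ, x ^ 4 * Real.exp (-c * x ^ 2) = 3 * Real.sqrt (π / c) / (4 * c ^ 2) := by
  have h := mom_rec hc 2 one_le_two
  rw [show (2:ℕ)*2-2 = 2 from rfl, show (2:ℕ)*2 = 4 from rfl, mom1 hc] at h
  set S := Real.sqrt (π / c) with hS
  set I := ∫ x : ℝ, x ^ 4 * Real.exp (-c * x ^ 2) with hI
  push_cast at h
  field_simp at h ⊢
  linarith


lemma pf1 {t : ℝ} (ht : 0 ≤ t) : (1+t)*(1+t^2) ≤ 4*(1+t^4) := by nlinarith [sq_nonneg t, sq_nonneg (t-1), sq_nonneg (t^2-1), sq_nonneg (t^2-t)]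
lemma pf2 {t : ℝ} (ht : 0 ≤ t) : t*(1+t^2) ≤ 2*(1+t^4) := by nlinarith [sq_nonneg (t-1), sq_nonneg (t^2-1), sq_nonneg (t^2-t)]
lemma pf3 {t : ℝ} (ht : 0 ≤ t) : (1+t^2)^2 ≤ 4*(1+t^4) := by nlinarith [sq_nonneg (t^2-1)]
lemma pf4 {t : ℝ} (ht : 0 ≤ t) : t*(1+t)^2 ≤ 4*(1+t^4) := by nlinarith [sq_nonneg (t-1), sq_nonneg (t^2-1), sq_nonneg (t^2-t)]

set_option maxHeartbeats 2000000 in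
lemma key_pt (ν x y : ℝ) (hν : 5 ≤ ν) (hx : 1 ≤ x) (hy0 : 0 ≤ y) (hy1 : y ≤ 1) :
    |(1 - y) ^ ((ν-2)/2) *
        ((ν-1)*(1/2 + 2*x - 4*x*y + 2*x^2*y*(1-y))*(1/2 - 2*x*y - 2*x^2*y*(1-y))
          + (ν-1)*(ν-2)/2*(1/2 - 2*x*y - 2*x^2*y*(1-y))^2)
      - (-4*(ν-1)*x^3*y + 2*(ν-1)*(ν-4)*x^4*y^2)|
      ≤ 200*ν^3*x*(1 + x^4*y^4) := by
  have hx0 : (0:ℝ) < x := by linarith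
  obtain ⟨t, htdef⟩ : ∃ t : ℝ, t = x*y := ⟨_, rfl⟩
  have ht0 : 0 ≤ t := by rw [htdef]; positivity
  have htx : t ≤ x := by rw [htdef]; nlinarith
  obtain ⟨r, hrdef⟩ : ∃ r : ℝ, r = 1/2 - 2*t + 2*t^2 := ⟨_, rfl⟩
  obtain ⟨w, hwdef⟩ : ∃ w : ℝ, w = 1/2 - 4*t - 2*t^2 := ⟨_, rfl⟩
  have hr : |r| ≤ 5*(1+t^2) := by
    rw [hrdef, abs_le]; constructor <;> nlinarith [sq_nonneg (t-1), sq_nonneg t]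
  have hw : |w| ≤ 5*(1+t^2) := by
    rw [hwdef, abs_le]; constructor <;> nlinarith [sq_nonneg (t-1), sq_nonneg t]
  obtain ⟨L1, hL1def⟩ : ∃ L1 : ℝ, L1 = 1/2 + 2*x - 4*x*y + 2*x^2*y*(1-y) := ⟨_, rfl⟩
  obtain ⟨L2, hL2def⟩ : ∃ L2 : ℝ, L2 = 1/2 - 2*x*y - 2*x^2*y*(1-y) := ⟨_, rfl⟩
  have hL1e : L1 = 2*x + 2*x*t + w := by rw [hL1def, hwdef, htdef]; ring
  have hL2e : L2 = -(2*x*t) + r := by rw [hL2def, hrdef, htdef]; ring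
  rw [← hL1def, ← hL2def]
  obtain ⟨Q, hQdef⟩ : ∃ Q : ℝ, Q = (ν-1)*L1*L2 + (ν-1)*(ν-2)/2*L2^2 := ⟨_, rfl⟩
  obtain ⟨M, hMdef⟩ : ∃ M : ℝ, M = -4*(ν-1)*x^3*y + 2*(ν-1)*(ν-4)*x^4*y^2 := ⟨_, rfl⟩
  obtain ⟨P, hPdef⟩ : ∃ P : ℝ, P = (1 - y) ^ ((ν-2)/2) := ⟨_, rfl⟩
  rw [← hQdef, ← hMdef, ← hPdef]
  have hxt : (0:ℝ) ≤ x*t := mul_nonneg hx0.le ht0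
  have h1t : (0:ℝ) ≤ 1+t := by linarith
  -- bounds on L1, L2
  have hL1b : |L1| ≤ 7*x*(1+t) := by
    rw [hL1e]
    refine (abs_add_le _ _).trans ?_
    rw [abs_of_nonneg (by nlinarith : (0:ℝ) ≤ 2*x + 2*x*t)]
    have : 5*(1+t^2) ≤ 5*x + 5*x*t := by nlinarith
    linarith [hw]
  have hL2b : |L2| ≤ 7*x*(1+t) := by
    rw [hL2e]
    refine (abs_add_le _ _).trans ?_
    rw [abs_neg, abs_of_nonneg (by nlinarith : (0:ℝ) ≤ 2*x*t)]
    have : 5*(1+t^2) ≤ 5*x + 5*x*t := by nlinarith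
    linarith [hr]
  have hQb : |Q| ≤ 25*ν^2*x^2*(1+t)^2 := by
    rw [hQdef]
    refine (abs_add_le _ _).trans ?_
    have h1 : |(ν-1)*L1*L2| ≤ (ν-1)*(7*x*(1+t))*(7*x*(1+t)) := by
      rw [abs_mul, abs_mul, abs_of_nonneg (by linarith : (0:ℝ) ≤ ν-1)]
      exact mul_le_mul (mul_le_mul_of_nonneg_left hL1b (by linarith)) hL2b (abs_nonneg _) (by nlinarith : (0:ℝ) ≤ (ν-1)*(7*x*(1+t)))
    have hc2 : (0:ℝ) ≤ (ν-1)*(ν-2)/2 := by nlinarith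
    have h2 : |(ν-1)*(ν-2)/2*L2^2| ≤ (ν-1)*(ν-2)/2*(7*x*(1+t))^2 := by
      rw [abs_mul, abs_of_nonneg hc2]
      refine mul_le_mul_of_nonneg_left ?_ hc2
      rw [abs_of_nonneg (sq_nonneg L2)]
      have := sq_le_sq' (by linarith [abs_nonneg L2, hL2b, neg_abs_le L2] : -(7*x*(1+t)) ≤ L2) (le_of_abs_le hL2b)
      exact this
    have hmain : (ν-1)*(7*x*(1+t))*(7*x*(1+t)) + (ν-1)*(ν-2)/2*(7*x*(1+t))^2
        ≤ 25*ν^2*x^2*(1+t)^2 := by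
      linarith [mul_nonneg (sq_nonneg (x*(1+t))) (sq_nonneg ν),
        mul_nonneg (sq_nonneg (x*(1+t))) (show (0:ℝ) ≤ ν by linarith)]
    linarith
  -- error E = Q - M bound
  have hEid : Q - M = (ν-1)*((2*x+2*x*t)*r - 2*x*t*w + w*r + (ν-2)*(-(2*x*t*r) + r^2/2)) := by
    rw [hQdef, hMdef, hL1e, hL2e, htdef]; ring
  have hEb : |Q - M| ≤ 74*ν^2*x*(1+t^4) := by
    rw [hEid, abs_mul, abs_of_nonneg (by linarith : (0:ℝ) ≤ ν-1)]
    have habs : |(2*x+2*x*t)*r - 2*x*t*w + w*r + (ν-2)*(-(2*x*t*r) + r^2/2)|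
        ≤ (2*x+2*x*t)*(5*(1+t^2)) + 2*x*t*(5*(1+t^2)) + (5*(1+t^2))^2
          + (ν-2)*(2*x*t*(5*(1+t^2)) + (5*(1+t^2))^2/2) := by
      refine (abs_add_le _ _).trans (add_le_add ((abs_add_le _ _).trans (add_le_add ((abs_sub _ _).trans (add_le_add ?_ ?_)) ?_)) ?_)
      · rw [abs_mul, abs_of_nonneg (by nlinarith : (0:ℝ) ≤ 2*x+2*x*t)]
        exact mul_le_mul_of_nonneg_left hr (by nlinarith)
      · rw [abs_mul, abs_of_nonneg (by nlinarith : (0:ℝ) ≤ 2*x*t)]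
        exact mul_le_mul_of_nonneg_left hw (by nlinarith)
      · rw [abs_mul]
        calc |w| * |r| ≤ (5*(1+t^2))*(5*(1+t^2)) := mul_le_mul hw hr (abs_nonneg _) (by positivity)
        _ = (5*(1+t^2))^2 := by ring
      · rw [abs_mul, abs_of_nonneg (by linarith : (0:ℝ) ≤ ν-2)]
        refine mul_le_mul_of_nonneg_left ((abs_add_le _ _).trans (add_le_add ?_ ?_)) (by linarith)
        · rw [abs_neg, abs_mul, abs_of_nonneg (by nlinarith : (0:ℝ) ≤ 2*x*t)]
          exact mul_le_mul_of_nonneg_left hr (by nlinarith)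
        · rw [abs_div, abs_of_nonneg (by norm_num : (0:ℝ) ≤ (2:ℝ)), abs_of_nonneg (sq_nonneg r)]
          have h5 : r^2 ≤ (5*(1+t^2))^2 :=
            sq_le_sq' (by linarith [neg_abs_le r] : -(5*(1+t^2)) ≤ r) (le_of_abs_le hr)
          linarith
    refine le_trans (mul_le_mul_of_nonneg_left habs (by linarith)) ?_
    have hb1 := mul_le_mul_of_nonneg_left (pf1 ht0) hx0.le
    have hb2 := mul_le_mul_of_nonneg_left (pf2 ht0) hx0.le
    have hb3 := pf3 ht0
    have b1 : (2*x+2*x*t)*(5*(1+t^2)) ≤ 40*x*(1+t^4) := by linarith [hb1]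
    have b2 : 2*x*t*(5*(1+t^2)) ≤ 20*x*(1+t^4) := by linarith [hb2]
    have b3 : (5*(1+t^2))^2 ≤ 100*x*(1+t^4) := by
      linarith [hb3, mul_le_mul_of_nonneg_right (show (1:ℝ) ≤ x from hx) (show (0:ℝ) ≤ 4*(1+t^4) by positivity)]
    have b4 : (ν-2)*(2*x*t*(5*(1+t^2)) + (5*(1+t^2))^2/2) ≤ (ν-2)*(70*x*(1+t^4)) := by
      refine mul_le_mul_of_nonneg_left ?_ (by linarith)
      linarith
    have hS := add_le_add (add_le_add (add_le_add b1 b2) b3) b4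
    refine le_trans (mul_le_mul_of_nonneg_left hS (by linarith : (0:ℝ) ≤ ν-1)) ?_
    have hpos : (0:ℝ) ≤ x*(1+t^4) := by positivity
    linarith [mul_nonneg hpos (sq_nonneg ν), mul_nonneg hpos (show (0:ℝ) ≤ ν by linarith),
      hpos]
  -- rpow bounds
  have hP1 : P ≤ 1 := by
    rw [hPdef]; exact Real.rpow_le_one (by linarith) (by linarith) (by linarith)
  have hP0 : 1 - ((ν-2)/2)*y ≤ P := by
    have h := one_add_mul_self_le_rpow_one_add (s := -y) (by linarith) (p := (ν-2)/2) (by linarith)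
    rw [hPdef]
    calc 1 - ((ν-2)/2)*y = 1 + ((ν-2)/2)*(-y) := by ring
    _ ≤ (1 + -y) ^ ((ν-2)/2) := h
    _ = (1 - y) ^ ((ν-2)/2) := by rw [show (1:ℝ) + -y = 1 - y by ring]
  have hPd : |P - 1| ≤ ((ν-2)/2)*y := by
    rw [abs_le]
    constructor <;> nlinarith
  -- assemble
  have split : P * Q - M = (P - 1)*Q + (Q - M) := by ring
  rw [split]
  refine (abs_add_le _ _).trans ?_
  have h1 : |(P-1)*Q| ≤ ((ν-2)/2)*y * (25*ν^2*x^2*(1+t)^2) := by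
    rw [abs_mul]
    exact mul_le_mul hPd hQb (abs_nonneg _) (by nlinarith : (0:ℝ) ≤ ((ν-2)/2)*y)
  have h2 : ((ν-2)/2)*y * (25*ν^2*x^2*(1+t)^2) ≤ 50*ν^3*x*(1+t^4) := by
    have hid : y * (x^2*(1+t)^2) = x*(t*(1+t)^2) := by rw [htdef]; ring
    have hp4 : x*(t*(1+t)^2) ≤ x*(4*(1+t^4)) := mul_le_mul_of_nonneg_left (pf4 ht0) hx0.le
    have hy2 : y * (x^2*(1+t)^2) ≤ 4*x*(1+t^4) := by rw [hid]; linarith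
    have hc : (0:ℝ) ≤ ((ν-2)/2)*(25*ν^2) := by
      have : (0:ℝ) ≤ ν-2 := by linarith
      positivity
    calc ((ν-2)/2)*y * (25*ν^2*x^2*(1+t)^2) = ((ν-2)/2)*(25*ν^2) * (y*(x^2*(1+t)^2)) := by ring
    _ ≤ ((ν-2)/2)*(25*ν^2) * (4*x*(1+t^4)) := mul_le_mul_of_nonneg_left hy2 hc
    _ ≤ 50*ν^3*x*(1+t^4) := by
        linarith [mul_nonneg (mul_nonneg hx0.le (show (0:ℝ) ≤ 1+t^4 by positivity)) (sq_nonneg ν)]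
  have h4 : 74*ν^2*x*(1+t^4) ≤ 15*ν^3*x*(1+t^4) := by
    have hu : (0:ℝ) ≤ x*(1+t^4) := by positivity
    have h5 : (0:ℝ) ≤ ν^2*(ν-5) := mul_nonneg (sq_nonneg ν) (by linarith)
    linarith [mul_nonneg hu h5, mul_nonneg hu (sq_nonneg ν)]
  have hfin : t^4 = x^4*y^4 := by rw [htdef]; ring
  rw [← hfin]
  have hν3 : (0:ℝ) ≤ ν^3 := pow_nonneg (by linarith) 3
  linarith [h1, h2, hEb, h4,
    mul_nonneg (mul_nonneg hν3 hx0.le) (show (0:ℝ) ≤ 1+t^4 by positivity)]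
lemma Jval (ν ℓ : ℝ) (hν : 5 ≤ ν) (hℓ : 1 ≤ ℓ) :
    ∫ s : ℝ, Real.exp (-((ν-4)*ℓ) * s^2) * (-4*(ν-1)*ℓ^3*s^2 + 2*(ν-1)*(ν-4)*ℓ^4*s^4)
      = -((ν - 1) * Real.sqrt π / (2 * (ν - 4) ^ ((3:ℝ)/2)) * ℓ ^ ((3:ℝ)/2)) := by
  have ha : (0:ℝ) < ν - 4 := by linarith
  have hl0 : (0:ℝ) < ℓ := by linarith
  have hc : (0:ℝ) < (ν-4)*ℓ := by positivity
  have hsplit : (fun s : ℝ => Real.exp (-((ν-4)*ℓ) * s^2) * (-4*(ν-1)*ℓ^3*s^2 + 2*(ν-1)*(ν-4)*ℓ^4*s^4))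
      = fun s : ℝ => (-4*(ν-1)*ℓ^3) * (s^2 * Real.exp (-((ν-4)*ℓ) * s^2))
        + (2*(ν-1)*(ν-4)*ℓ^4) * (s^4 * Real.exp (-((ν-4)*ℓ) * s^2)) := by
    funext s; ring
  rw [hsplit, integral_add (((integrable_pow_gauss hc 2).const_mul _))
      ((integrable_pow_gauss hc 4).const_mul _), integral_const_mul, integral_const_mul,
    mom1 hc, mom2 hc]
  obtain ⟨A, hA0, hA⟩ : ∃ A : ℝ, 0 < A ∧ ν - 4 = A^2 :=
    ⟨Real.sqrt (ν-4), Real.sqrt_pos.2 ha, (Real.sq_sqrt ha.le).symm⟩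
  obtain ⟨L, hL0, hL⟩ : ∃ L : ℝ, 0 < L ∧ ℓ = L^2 :=
    ⟨Real.sqrt ℓ, Real.sqrt_pos.2 hl0, (Real.sq_sqrt hl0.le).symm⟩
  rw [hA, hL]
  have h1 : Real.sqrt (π/(A^2*L^2)) = Real.sqrt π/(A*L) := by
    rw [div_eq_mul_inv, Real.sqrt_mul Real.pi_pos.le, Real.sqrt_inv,
      show A^2*L^2 = (A*L)^2 by ring, Real.sqrt_sq (by positivity), div_eq_mul_inv]
  have h2 : ((A^2 : ℝ)) ^ ((3:ℝ)/2) = A^3 := by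
    rw [← Real.rpow_natCast A 2, ← Real.rpow_mul hA0.le]
    norm_num
  have h3 : ((L^2 : ℝ)) ^ ((3:ℝ)/2) = L^3 := by
    rw [← Real.rpow_natCast L 2, ← Real.rpow_mul hL0.le]
    norm_num
  rw [h1, h2, h3]
  have hπ := Real.sqrt_nonneg π
  field_simp
  ring

lemma s8bound {c : ℝ} (hc : 0 < c) (s : ℝ) :
    s^8 * Real.exp (-c*s^2) ≤ (4096/c^4) * Real.exp (-(c/2)*s^2) := by
  have h0 : c*s^2/8 ≤ Real.exp (c*s^2/8) :=
    le_trans (by linarith [Real.add_one_le_exp (c*s^2/8)]) le_rfl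
  have h1 : (c*s^2/8)^4 ≤ Real.exp (c*s^2/8)^4 :=
    pow_le_pow_left₀ (by positivity) h0 4
  have h2 : Real.exp (c*s^2/8)^4 = Real.exp (c*s^2/2) := by
    rw [← Real.exp_nat_mul]; congr 1; ring
  have hs8 : s^8 ≤ (4096/c^4) * Real.exp (c*s^2/2) := by
    have hid : s^8 = (4096/c^4) * (c*s^2/8)^4 := by field_simp; ring
    rw [hid]
    refine mul_le_mul_of_nonneg_left ?_ (by positivity)
    rw [← h2]; exact h1
  calc s^8 * Real.exp (-c*s^2) ≤ ((4096/c^4) * Real.exp (c*s^2/2)) * Real.exp (-c*s^2) :=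
        mul_le_mul_of_nonneg_right hs8 (Real.exp_pos _).le
  _ = (4096/c^4) * Real.exp (-(c/2)*s^2) := by
      rw [mul_assoc, ← Real.exp_add, show c*s^2/2 + -c*s^2 = -(c/2)*s^2 by ring]

set_option maxHeartbeats 1000000 in
lemma main_est (n : ℕ) (hn : 5 ≤ n) (ℓ : ℝ) (hℓ : 1 ≤ ℓ) :
    |I2 n ℓ + ((n : ℝ) - 1) * Real.sqrt π / (2 * ((n : ℝ) - 4) ^ ((3 : ℝ) / 2)) * ℓ ^ ((3 : ℝ) / 2)|
      ≤ (200*(n:ℝ)^3*(Real.sqrt π + 12288) + 73728*(n:ℝ)^2) * ℓ ^ ((1 : ℝ) / 2) := by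
  have hν : (5:ℝ) ≤ (n:ℝ) := by exact_mod_cast hn
  set ν : ℝ := (n : ℝ) with hνdef
  have ha : (1:ℝ) ≤ ν - 4 := by linarith
  have hl0 : (0:ℝ) < ℓ := by linarith
  have hc0 : (0:ℝ) < (ν-4)*ℓ := by nlinarith
  have hcl : ℓ ≤ (ν-4)*ℓ := by nlinarith
  have hc2 : (0:ℝ) < (ν-4)*ℓ/2 := by linarith
  set f : ℝ → ℝ := fun s => Real.exp (-((ν-4)*ℓ) * s ^ 2) * (1 - s ^ 2) ^ ((ν - 2) / 2) *
      ((ν - 1) * lam1 ℓ s * lam2 ℓ s + ((ν - 1) * (ν - 2) / 2) * (lam2 ℓ s) ^ 2) with hfdef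
  set m : ℝ → ℝ := fun s => Real.exp (-((ν-4)*ℓ) * s^2) *
      (-4*(ν-1)*ℓ^3*s^2 + 2*(ν-1)*(ν-4)*ℓ^4*s^4) with hmdef
  -- I2 as set integral of f
  have hI2 : I2 n ℓ = ∫ s in Set.Ioc (-1:ℝ) 1, f s := by
    rw [I2, intervalIntegral.integral_of_le (by norm_num : (-1:ℝ) ≤ 1)]
    refine setIntegral_congr_fun measurableSet_Ioc (fun s _ => ?_)
    rw [hfdef]
    simp only
    rw [show -((n:ℝ) - 4) * ℓ * s ^ 2 = -(((n:ℝ)-4)*ℓ) * s^2 by ring]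
  -- integrability
  have hlam1c : Continuous (lam1 ℓ) := by unfold lam1; fun_prop
  have hlam2c : Continuous (lam2 ℓ) := by unfold lam2; fun_prop
  have hf_cont : Continuous f := by
    rw [hfdef]
    refine ((Real.continuous_exp.comp (by continuity)).mul ?_).mul
      (((continuous_const.mul hlam1c).mul hlam2c).add (continuous_const.mul (hlam2c.pow 2)))
    refine Continuous.rpow_const (by continuity) (fun s => Or.inr (by linarith))
  have hf_int : IntegrableOn f (Set.Ioc (-1:ℝ) 1) := hf_cont.integrableOn_Ioc
  have hm_eq : m = fun s : ℝ => (-4*(ν-1)*ℓ^3) * (s^2 * Real.exp (-((ν-4)*ℓ) * s^2))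
        + (2*(ν-1)*(ν-4)*ℓ^4) * (s^4 * Real.exp (-((ν-4)*ℓ) * s^2)) := by
    rw [hmdef]; funext s; ring
  have hm_int : Integrable m := by
    rw [hm_eq]
    exact ((integrable_pow_gauss hc0 2).const_mul _).add ((integrable_pow_gauss hc0 4).const_mul _)
  -- value of ∫ m
  have hJ : ∫ s : ℝ, m s = -((ν - 1) * Real.sqrt π / (2 * (ν - 4) ^ ((3:ℝ)/2)) * ℓ ^ ((3:ℝ)/2)) :=
    Jval ν ℓ hν hℓ
  -- pointwise bound on Ioc
  set g : ℝ → ℝ := fun s => 200*ν^3*ℓ*(1 + ℓ^4*s^8) * Real.exp (-((ν-4)*ℓ) * s^2) with hgdef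
  have hg_nonneg : ∀ s, 0 ≤ g s := fun s => by
    rw [hgdef]; simp only; positivity
  have hg_eq : g = fun s : ℝ => (200*ν^3*ℓ) * Real.exp (-((ν-4)*ℓ) * s^2)
      + (200*ν^3*ℓ*ℓ^4) * (s^8 * Real.exp (-((ν-4)*ℓ) * s^2)) := by
    rw [hgdef]; funext s; ring
  have hg_int : Integrable g := by
    rw [hg_eq]
    exact ((integrable_exp_neg_mul_sq hc0).const_mul _).add
      ((integrable_pow_gauss hc0 8).const_mul _)
  have hfm : ∀ s ∈ Set.Ioc (-1:ℝ) 1, |f s - m s| ≤ g s := by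
    intro s hs
    have hy1 : s^2 ≤ 1 := by
      rcases hs with ⟨h1, h2⟩; nlinarith
    have hkey := key_pt ν ℓ (s^2) hν hℓ (sq_nonneg s) hy1
    have hfactor : f s - m s = Real.exp (-((ν-4)*ℓ) * s^2) *
        ((1 - s^2) ^ ((ν-2)/2) *
          ((ν-1)*(1/2 + 2*ℓ - 4*ℓ*s^2 + 2*ℓ^2*s^2*(1-s^2))*(1/2 - 2*ℓ*s^2 - 2*ℓ^2*s^2*(1-s^2))
            + (ν-1)*(ν-2)/2*(1/2 - 2*ℓ*s^2 - 2*ℓ^2*s^2*(1-s^2))^2)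
          - (-4*(ν-1)*ℓ^3*s^2 + 2*(ν-1)*(ν-4)*ℓ^4*(s^2)^2)) := by
      rw [hfdef, hmdef]; simp only [lam1, lam2]; ring
    rw [hfactor, abs_mul, abs_of_nonneg (Real.exp_pos _).le, hgdef]
    simp only
    calc Real.exp (-((ν-4)*ℓ) * s^2) * |_| ≤
        Real.exp (-((ν-4)*ℓ) * s^2) * (200*ν^3*ℓ*(1 + ℓ^4*(s^2)^4)) :=
          mul_le_mul_of_nonneg_left hkey (Real.exp_pos _).le
    _ = 200*ν^3*ℓ*(1 + ℓ^4*s^8) * Real.exp (-((ν-4)*ℓ) * s^2) := by ring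
  -- tail pointwise bound on complement
  have hν0 : (0:ℝ) ≤ ν := by linarith
  have hν2 : (0:ℝ) ≤ ν^2 := sq_nonneg ν
  have hν3 : (0:ℝ) ≤ ν^3 := pow_nonneg hν0 3
  have hl4c4 : ℓ^4 ≤ ((ν-4)*ℓ)^4 := pow_le_pow_left₀ hl0.le hcl 4
  have htail : ∀ s ∈ (Set.Ioc (-1:ℝ) 1)ᶜ, |m s| ≤ 24576*ν^2 * Real.exp (-((ν-4)*ℓ/2) * s^2) := by
    intro s hs
    have hs2 : 1 ≤ s^2 := by
      simp only [Set.mem_compl_iff, Set.mem_Ioc, not_and_or, not_lt, not_le] at hs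
      rcases hs with h | h
      · nlinarith
      · nlinarith
    have hsq : (0:ℝ) ≤ s^2 := sq_nonneg s
    have e1 : s^2 ≤ s^4 := by nlinarith
    have e2 : s^4 ≤ s^8 := by nlinarith
    have e3 : ℓ^3 ≤ ℓ^4 := by
      nlinarith [mul_le_mul_of_nonneg_left hℓ (pow_nonneg hl0.le 3)]
    have hls : ℓ^3*s^2 ≤ ℓ^4*s^8 :=
      mul_le_mul e3 (e1.trans e2) hsq (pow_nonneg hl0.le 4)
    have hls2 : ℓ^4*s^4 ≤ ℓ^4*s^8 := mul_le_mul_of_nonneg_left e2 (pow_nonneg hl0.le 4)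
    have hu : (0:ℝ) ≤ ℓ^4*s^8 := by positivity
    have h1 : |(-4*(ν-1)*ℓ^3*s^2 + 2*(ν-1)*(ν-4)*ℓ^4*s^4)| ≤ 6*ν^2*(ℓ^4*s^8) := by
      rw [abs_le]
      constructor
      · nlinarith [mul_le_mul_of_nonneg_left hls (by linarith : (0:ℝ) ≤ 4*(ν-1)),
          mul_nonneg hu hν2, mul_nonneg hu hν0,
          mul_nonneg (mul_nonneg (by linarith : (0:ℝ) ≤ 2*(ν-1)) (by linarith : (0:ℝ) ≤ ν-4)) (by positivity : (0:ℝ) ≤ ℓ^4*s^4)]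
      · nlinarith [mul_le_mul_of_nonneg_left hls2 (by nlinarith : (0:ℝ) ≤ 2*(ν-1)*(ν-4)),
          mul_nonneg hu hν2, mul_nonneg hu hν0,
          mul_nonneg (mul_nonneg (by linarith : (0:ℝ) ≤ 4*(ν-1)) hl0.le) hsq,
          mul_nonneg (mul_nonneg (mul_nonneg (by linarith : (0:ℝ) ≤ 4*(ν-1)) hl0.le) hl0.le) hsq,
          mul_nonneg (mul_nonneg (by linarith : (0:ℝ) ≤ 4*(ν-1)) (by positivity : (0:ℝ) ≤ ℓ^3)) hsq]
    rw [hmdef]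
    rw [abs_mul, abs_of_nonneg (Real.exp_pos _).le]
    calc Real.exp (-((ν-4)*ℓ) * s^2) * |(-4*(ν-1)*ℓ^3*s^2 + 2*(ν-1)*(ν-4)*ℓ^4*s^4)|
        ≤ Real.exp (-((ν-4)*ℓ) * s^2) * (6*ν^2*(ℓ^4*s^8)) :=
          mul_le_mul_of_nonneg_left h1 (Real.exp_pos _).le
    _ = 6*ν^2*ℓ^4*(s^8 * Real.exp (-((ν-4)*ℓ)*s^2)) := by ring
    _ ≤ 6*ν^2*ℓ^4*((4096/((ν-4)*ℓ)^4) * Real.exp (-((ν-4)*ℓ/2)*s^2)) := by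
        refine mul_le_mul_of_nonneg_left ?_ (by positivity)
        have := s8bound hc0 s
        convert this using 3 <;> ring
    _ ≤ 24576*ν^2 * Real.exp (-((ν-4)*ℓ/2) * s^2) := by
        have hr : 6*ν^2*ℓ^4*(4096/((ν-4)*ℓ)^4) ≤ 24576*ν^2 := by
          rw [mul_div_assoc']
          rw [div_le_iff₀ (by positivity : (0:ℝ) < ((ν-4)*ℓ)^4)]
          calc 6*ν^2*ℓ^4*4096 = 24576*ν^2*ℓ^4 := by ring
          _ ≤ 24576*ν^2*((ν-4)*ℓ)^4 := by
              refine mul_le_mul_of_nonneg_left hl4c4 (by positivity)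
        calc 6*ν^2*ℓ^4*((4096/((ν-4)*ℓ)^4) * Real.exp (-((ν-4)*ℓ/2)*s^2))
            = (6*ν^2*ℓ^4*(4096/((ν-4)*ℓ)^4)) * Real.exp (-((ν-4)*ℓ/2)*s^2) := by ring
        _ ≤ 24576*ν^2 * Real.exp (-((ν-4)*ℓ/2) * s^2) :=
            mul_le_mul_of_nonneg_right hr (Real.exp_pos _).le
  -- integrable gaussians for half-exponent
  have hgauss2 : Integrable (fun s : ℝ => Real.exp (-((ν-4)*ℓ/2) * s^2)) :=
    integrable_exp_neg_mul_sq hc2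
  -- tail integral bound
  have hB2 : |∫ s in (Set.Ioc (-1:ℝ) 1)ᶜ, m s| ≤ 24576*ν^2 * Real.sqrt (π/((ν-4)*ℓ/2)) := by
    have step1 : |∫ s in (Set.Ioc (-1:ℝ) 1)ᶜ, m s| ≤ ∫ s in (Set.Ioc (-1:ℝ) 1)ᶜ, |m s| := by
      simpa [Real.norm_eq_abs] using
        norm_integral_le_integral_norm (μ := volume.restrict (Set.Ioc (-1:ℝ) 1)ᶜ) m
    have step2 : ∫ s in (Set.Ioc (-1:ℝ) 1)ᶜ, |m s|
        ≤ ∫ s in (Set.Ioc (-1:ℝ) 1)ᶜ, 24576*ν^2 * Real.exp (-((ν-4)*ℓ/2) * s^2) := by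
      refine setIntegral_mono_on hm_int.abs.integrableOn
        ((hgauss2.const_mul _).integrableOn) measurableSet_Ioc.compl htail
    have step3 : ∫ s in (Set.Ioc (-1:ℝ) 1)ᶜ, 24576*ν^2 * Real.exp (-((ν-4)*ℓ/2) * s^2)
        ≤ ∫ s : ℝ, 24576*ν^2 * Real.exp (-((ν-4)*ℓ/2) * s^2) := by
      refine setIntegral_le_integral (hgauss2.const_mul _) ?_
      filter_upwards with s
      have := Real.exp_pos (-((ν-4)*ℓ/2) * s^2)
      positivity
    have step4 : ∫ s : ℝ, 24576*ν^2 * Real.exp (-((ν-4)*ℓ/2) * s^2)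
        = 24576*ν^2 * Real.sqrt (π/((ν-4)*ℓ/2)) := by
      rw [integral_const_mul, integral_gaussian]
    linarith
  -- main integral bound
  have hs8int : ∫ s : ℝ, s^8 * Real.exp (-((ν-4)*ℓ) * s^2)
      ≤ (4096/((ν-4)*ℓ)^4) * Real.sqrt (π/((ν-4)*ℓ/2)) := by
    have := integral_mono (integrable_pow_gauss hc0 8) (hgauss2.const_mul _)
      (fun s => by simpa using s8bound hc0 s)
    calc ∫ s : ℝ, s^8 * Real.exp (-((ν-4)*ℓ) * s^2)
        ≤ ∫ s : ℝ, (4096/((ν-4)*ℓ)^4) * Real.exp (-((ν-4)*ℓ/2) * s^2) := by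
          refine integral_mono (integrable_pow_gauss hc0 8) (hgauss2.const_mul _) (fun s => ?_)
          have := s8bound hc0 s
          convert this using 2 <;> ring
    _ = (4096/((ν-4)*ℓ)^4) * Real.sqrt (π/((ν-4)*ℓ/2)) := by
        rw [integral_const_mul, integral_gaussian]
  have hB1 : |∫ s in Set.Ioc (-1:ℝ) 1, (f s - m s)|
      ≤ 200*ν^3*ℓ * Real.sqrt (π/((ν-4)*ℓ))
        + 200*ν^3*ℓ*ℓ^4 * ((4096/((ν-4)*ℓ)^4) * Real.sqrt (π/((ν-4)*ℓ/2))) := by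
    have step1 : |∫ s in Set.Ioc (-1:ℝ) 1, (f s - m s)| ≤ ∫ s in Set.Ioc (-1:ℝ) 1, |f s - m s| := by
      simpa [Real.norm_eq_abs] using
        norm_integral_le_integral_norm (μ := volume.restrict (Set.Ioc (-1:ℝ) 1)) (fun s => f s - m s)
    have step2 : ∫ s in Set.Ioc (-1:ℝ) 1, |f s - m s| ≤ ∫ s in Set.Ioc (-1:ℝ) 1, g s :=
      setIntegral_mono_on ((hf_int.sub hm_int.integrableOn).abs) hg_int.integrableOn
        measurableSet_Ioc hfm
    have step3 : ∫ s in Set.Ioc (-1:ℝ) 1, g s ≤ ∫ s : ℝ, g s :=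
      setIntegral_le_integral hg_int (Filter.Eventually.of_forall hg_nonneg)
    have step4 : ∫ s : ℝ, g s = (200*ν^3*ℓ) * (∫ s : ℝ, Real.exp (-((ν-4)*ℓ) * s^2))
        + (200*ν^3*ℓ*ℓ^4) * (∫ s : ℝ, s^8 * Real.exp (-((ν-4)*ℓ) * s^2)) := by
      rw [hg_eq, integral_add ((integrable_exp_neg_mul_sq hc0).const_mul _)
        ((integrable_pow_gauss hc0 8).const_mul _), integral_const_mul, integral_const_mul]
    have step5 : (200*ν^3*ℓ) * (∫ s : ℝ, Real.exp (-((ν-4)*ℓ) * s^2))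
        = 200*ν^3*ℓ * Real.sqrt (π/((ν-4)*ℓ)) := by rw [integral_gaussian]
    have step6 : (200*ν^3*ℓ*ℓ^4) * (∫ s : ℝ, s^8 * Real.exp (-((ν-4)*ℓ) * s^2))
        ≤ 200*ν^3*ℓ*ℓ^4 * ((4096/((ν-4)*ℓ)^4) * Real.sqrt (π/((ν-4)*ℓ/2))) := by
      refine mul_le_mul_of_nonneg_left hs8int ?_
      have : (0:ℝ) ≤ ℓ^4 := by positivity
      nlinarith [mul_nonneg (mul_nonneg hν3 hl0.le) this]
    linarith
  -- scalar estimates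
  have hsqrtl : (0:ℝ) < Real.sqrt ℓ := Real.sqrt_pos.2 hl0
  have e1 : Real.sqrt (π/((ν-4)*ℓ)) ≤ Real.sqrt π / Real.sqrt ℓ := by
    rw [← Real.sqrt_div Real.pi_pos.le]
    refine Real.sqrt_le_sqrt ?_
    exact div_le_div_of_nonneg_left Real.pi_pos.le hl0 hcl
  have e2 : Real.sqrt (π/((ν-4)*ℓ/2)) ≤ 3 / Real.sqrt ℓ := by
    have h9 : Real.sqrt (9/ℓ) = 3 / Real.sqrt ℓ := by
      rw [Real.sqrt_div (by norm_num : (0:ℝ) ≤ 9), show (9:ℝ) = 3^2 by norm_num,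
        Real.sqrt_sq (by norm_num : (0:ℝ) ≤ 3)]
    rw [← h9]
    refine Real.sqrt_le_sqrt ?_
    rw [div_le_div_iff₀ (by linarith) hl0]
    nlinarith [Real.pi_le_four]
  have hT1 : 200*ν^3*ℓ * Real.sqrt (π/((ν-4)*ℓ)) ≤ 200*ν^3*Real.sqrt π*Real.sqrt ℓ := by
    calc 200*ν^3*ℓ * Real.sqrt (π/((ν-4)*ℓ)) ≤ 200*ν^3*ℓ * (Real.sqrt π / Real.sqrt ℓ) := by
          refine mul_le_mul_of_nonneg_left e1 (by nlinarith [mul_nonneg hν3 hl0.le])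
    _ = 200*ν^3*Real.sqrt π*(ℓ/Real.sqrt ℓ) := by ring
    _ = 200*ν^3*Real.sqrt π*Real.sqrt ℓ := by rw [Real.div_sqrt]
  have hq : ℓ*ℓ^4*(4096/((ν-4)*ℓ)^4) ≤ 4096*ℓ := by
    rw [mul_div_assoc', div_le_iff₀ (by positivity : (0:ℝ) < ((ν-4)*ℓ)^4)]
    calc ℓ*ℓ^4*4096 = 4096*ℓ*ℓ^4 := by ring
    _ ≤ 4096*ℓ*((ν-4)*ℓ)^4 := mul_le_mul_of_nonneg_left hl4c4 (by positivity)
    _ = 4096*ℓ*((ν-4)*ℓ)^4 := rfl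
  have hT2 : 200*ν^3*ℓ*ℓ^4 * ((4096/((ν-4)*ℓ)^4) * Real.sqrt (π/((ν-4)*ℓ/2)))
      ≤ 2457600*ν^3*Real.sqrt ℓ := by
    have hs0 : (0:ℝ) ≤ Real.sqrt (π/((ν-4)*ℓ/2)) := Real.sqrt_nonneg _
    calc 200*ν^3*ℓ*ℓ^4 * ((4096/((ν-4)*ℓ)^4) * Real.sqrt (π/((ν-4)*ℓ/2)))
        = (200*ν^3) * (ℓ*ℓ^4*(4096/((ν-4)*ℓ)^4)) * Real.sqrt (π/((ν-4)*ℓ/2)) := by ring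
    _ ≤ (200*ν^3) * (4096*ℓ) * (3 / Real.sqrt ℓ) := by
        refine mul_le_mul (mul_le_mul_of_nonneg_left hq (by nlinarith)) e2 hs0 ?_
        nlinarith [mul_nonneg hν3 hl0.le]
    _ = 2457600*ν^3*(ℓ/Real.sqrt ℓ) := by ring
    _ = 2457600*ν^3*Real.sqrt ℓ := by rw [Real.div_sqrt]
  have hT3 : 24576*ν^2 * Real.sqrt (π/((ν-4)*ℓ/2)) ≤ 73728*ν^2*Real.sqrt ℓ := by
    have hinv : 3 / Real.sqrt ℓ ≤ 3 * Real.sqrt ℓ := by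
      rw [div_le_iff₀ hsqrtl]
      have h1 : (1:ℝ) ≤ Real.sqrt ℓ := by
        rw [show (1:ℝ) = Real.sqrt 1 from (Real.sqrt_one).symm]
        exact Real.sqrt_le_sqrt hℓ
      nlinarith
    calc 24576*ν^2 * Real.sqrt (π/((ν-4)*ℓ/2)) ≤ 24576*ν^2 * (3 / Real.sqrt ℓ) := by
          refine mul_le_mul_of_nonneg_left e2 (by nlinarith)
    _ ≤ 24576*ν^2 * (3 * Real.sqrt ℓ) := by
          refine mul_le_mul_of_nonneg_left hinv (by nlinarith)
    _ = 73728*ν^2*Real.sqrt ℓ := by ring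
  -- assemble
  have hdiff : I2 n ℓ + (ν - 1) * Real.sqrt π / (2 * (ν - 4) ^ ((3:ℝ)/2)) * ℓ ^ ((3:ℝ)/2)
      = (∫ s in Set.Ioc (-1:ℝ) 1, (f s - m s)) - ∫ s in (Set.Ioc (-1:ℝ) 1)ᶜ, m s := by
    have hsum : (∫ s in Set.Ioc (-1:ℝ) 1, m s) + ∫ s in (Set.Ioc (-1:ℝ) 1)ᶜ, m s
        = ∫ s : ℝ, m s := integral_add_compl measurableSet_Ioc hm_int
    have hsub : ∫ s in Set.Ioc (-1:ℝ) 1, (f s - m s)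
        = (∫ s in Set.Ioc (-1:ℝ) 1, f s) - ∫ s in Set.Ioc (-1:ℝ) 1, m s :=
      integral_sub hf_int hm_int.integrableOn
    rw [hI2, hsub]
    linarith [hsum, hJ]
  rw [hdiff]
  have habs : |(∫ s in Set.Ioc (-1:ℝ) 1, (f s - m s)) - ∫ s in (Set.Ioc (-1:ℝ) 1)ᶜ, m s|
      ≤ |∫ s in Set.Ioc (-1:ℝ) 1, (f s - m s)| + |∫ s in (Set.Ioc (-1:ℝ) 1)ᶜ, m s| :=
    abs_sub _ _
  have hrw : ℓ ^ ((1:ℝ)/2) = Real.sqrt ℓ := (Real.sqrt_eq_rpow ℓ).symm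
  rw [hrw]
  calc |(∫ s in Set.Ioc (-1:ℝ) 1, (f s - m s)) - ∫ s in (Set.Ioc (-1:ℝ) 1)ᶜ, m s|
      ≤ |∫ s in Set.Ioc (-1:ℝ) 1, (f s - m s)| + |∫ s in (Set.Ioc (-1:ℝ) 1)ᶜ, m s| := habs
  _ ≤ (200*ν^3*ℓ * Real.sqrt (π/((ν-4)*ℓ))
        + 200*ν^3*ℓ*ℓ^4 * ((4096/((ν-4)*ℓ)^4) * Real.sqrt (π/((ν-4)*ℓ/2))))
      + 24576*ν^2 * Real.sqrt (π/((ν-4)*ℓ/2)) := add_le_add hB1 hB2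
  _ ≤ (200*ν^3*Real.sqrt π*Real.sqrt ℓ + 2457600*ν^3*Real.sqrt ℓ) + 73728*ν^2*Real.sqrt ℓ := by
      refine add_le_add (add_le_add hT1 hT2) hT3
  _ = (200*ν^3*(Real.sqrt π + 12288) + 73728*ν^2) * Real.sqrt ℓ := by ring

/-- For `n ≥ 5`, there are `C > 0` and `ℓ₀ ≥ 1` such that for all `ℓ ≥ ℓ₀`,
`|I₂(ℓ) + ((n−1)√π / (2(n−4)^{3/2})) ℓ^{3/2}| ≤ C ℓ^{1/2}`; in particular
`ℓ^{−3/2} I₂(ℓ) → −(n−1)√π / (2(n−4)^{3/2})` and `I₂(ℓ) → −∞` as `ℓ → ∞`. -/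
theorem stmt10 (n : ℕ) (hn : 5 ≤ n) :
    (∃ C > (0 : ℝ), ∃ ℓ₀ ≥ (1 : ℝ), ∀ ℓ ≥ ℓ₀,
        |I2 n ℓ + ((n : ℝ) - 1) * Real.sqrt π / (2 * ((n : ℝ) - 4) ^ ((3 : ℝ) / 2))
            * ℓ ^ ((3 : ℝ) / 2)|
          ≤ C * ℓ ^ ((1 : ℝ) / 2)) ∧
      Tendsto (fun ℓ : ℝ => ℓ ^ (-(3 : ℝ) / 2) * I2 n ℓ) atTop
        (nhds (-(((n : ℝ) - 1) * Real.sqrt π / (2 * ((n : ℝ) - 4) ^ ((3 : ℝ) / 2))))) ∧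
      Tendsto (fun ℓ : ℝ => I2 n ℓ) atTop atBot := by
  have hν : (5:ℝ) ≤ (n:ℝ) := by exact_mod_cast hn
  set K : ℝ := ((n : ℝ) - 1) * Real.sqrt π / (2 * ((n : ℝ) - 4) ^ ((3 : ℝ) / 2)) with hKdef
  have hKpos : 0 < K := by
    rw [hKdef]
    have h1 : (0:ℝ) < (n:ℝ) - 1 := by linarith
    have h2 : (0:ℝ) < Real.sqrt π := Real.sqrt_pos.2 Real.pi_pos
    have h3 : (0:ℝ) < ((n:ℝ) - 4) ^ ((3:ℝ)/2) := Real.rpow_pos_of_pos (by linarith) _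
    positivity
  set C : ℝ := 200*(n:ℝ)^3*(Real.sqrt π + 12288) + 73728*(n:ℝ)^2 with hCdef
  have hCpos : 0 < C := by
    rw [hCdef]
    have h2 : (0:ℝ) ≤ Real.sqrt π := Real.sqrt_nonneg _
    have h3 : (0:ℝ) < (n:ℝ) := by linarith
    positivity
  have hmain : ∀ ℓ ≥ (1:ℝ), |I2 n ℓ + K * ℓ ^ ((3:ℝ)/2)| ≤ C * ℓ ^ ((1:ℝ)/2) :=
    fun ℓ hℓ => main_est n hn ℓ hℓ
  refine ⟨⟨C, hCpos, 1, le_rfl, hmain⟩, ?_, ?_⟩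
  · -- second limit
    have hev : ∀ᶠ ℓ : ℝ in atTop, ‖ℓ ^ (-(3:ℝ)/2) * I2 n ℓ - (-K)‖ ≤ C / ℓ := by
      filter_upwards [eventually_ge_atTop (1:ℝ)] with ℓ hℓ
      have hl0 : (0:ℝ) < ℓ := by linarith
      have hid : ℓ ^ (-(3:ℝ)/2) * I2 n ℓ - (-K)
          = ℓ ^ (-(3:ℝ)/2) * (I2 n ℓ + K * ℓ ^ ((3:ℝ)/2)) := by
        have h1 : ℓ ^ (-(3:ℝ)/2) * ℓ ^ ((3:ℝ)/2) = 1 := by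
          rw [← Real.rpow_add hl0]; norm_num
        calc ℓ ^ (-(3:ℝ)/2) * I2 n ℓ - (-K)
            = ℓ ^ (-(3:ℝ)/2) * I2 n ℓ + K * (ℓ ^ (-(3:ℝ)/2) * ℓ ^ ((3:ℝ)/2)) := by rw [h1]; ring
        _ = ℓ ^ (-(3:ℝ)/2) * (I2 n ℓ + K * ℓ ^ ((3:ℝ)/2)) := by ring
      rw [hid, Real.norm_eq_abs, abs_mul,
        abs_of_nonneg (Real.rpow_nonneg hl0.le _)]
      have hb := hmain ℓ hℓ
      calc ℓ ^ (-(3:ℝ)/2) * |I2 n ℓ + K * ℓ ^ ((3:ℝ)/2)|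
          ≤ ℓ ^ (-(3:ℝ)/2) * (C * ℓ ^ ((1:ℝ)/2)) :=
            mul_le_mul_of_nonneg_left hb (Real.rpow_nonneg hl0.le _)
      _ = C * (ℓ ^ (-(3:ℝ)/2) * ℓ ^ ((1:ℝ)/2)) := by ring
      _ = C * ℓ⁻¹ := by
          rw [← Real.rpow_add hl0, show -(3:ℝ)/2 + 1/2 = -1 by norm_num,
            Real.rpow_neg_one]
      _ = C / ℓ := by rw [div_eq_mul_inv]
    have hlim : Tendsto (fun ℓ : ℝ => C / ℓ) atTop (nhds 0) :=
      tendsto_const_nhds.div_atTop tendsto_id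
    have := squeeze_zero_norm' hev hlim
    have h2 : Tendsto (fun ℓ : ℝ => ℓ ^ (-(3:ℝ)/2) * I2 n ℓ - (-K)) atTop (nhds 0) := this
    have h3 := h2.add_const (-K)
    simpa using h3
  · -- third limit
    have hub : ∀ᶠ ℓ : ℝ in atTop, I2 n ℓ ≤ C * ℓ ^ ((1:ℝ)/2) - K * ℓ ^ ((3:ℝ)/2) := by
      filter_upwards [eventually_ge_atTop (1:ℝ)] with ℓ hℓ
      have := hmain ℓ hℓ
      have := abs_le.1 this
      linarith [this.2]
    have hbot : Tendsto (fun ℓ : ℝ => C * ℓ ^ ((1:ℝ)/2) - K * ℓ ^ ((3:ℝ)/2)) atTop atBot := by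
      have hfac : ∀ᶠ ℓ : ℝ in atTop, ℓ ^ ((1:ℝ)/2) * (C - K * ℓ)
          = C * ℓ ^ ((1:ℝ)/2) - K * ℓ ^ ((3:ℝ)/2) := by
        filter_upwards [eventually_gt_atTop (0:ℝ)] with ℓ hl0
        have h32 : ℓ ^ ((3:ℝ)/2) = ℓ ^ ((1:ℝ)/2) * ℓ := by
          rw [show (3:ℝ)/2 = 1/2 + 1 by norm_num, Real.rpow_add hl0, Real.rpow_one]
        rw [h32]; ring
      have h1 : Tendsto (fun ℓ : ℝ => ℓ ^ ((1:ℝ)/2)) atTop atTop :=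
        tendsto_rpow_atTop (by norm_num)
      have h2 : Tendsto (fun ℓ : ℝ => C - K * ℓ) atTop atBot := by
        have h3 : Tendsto (fun ℓ : ℝ => K * ℓ) atTop atTop :=
          (tendsto_id.const_mul_atTop hKpos)
        have h4 : Tendsto (fun ℓ : ℝ => K * ℓ - C) atTop atTop :=
          tendsto_atTop_add_const_right _ (-C) h3
        have h5 := tendsto_neg_atTop_atBot.comp h4
        refine h5.congr (fun ℓ => by simp only [Function.comp_apply]; ring)
      exact (h1.atTop_mul_atBot₀ h2).congr' hfac
    exact tendsto_atBot_mono' atTop hub hbot
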